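/- There exist positive constants c_1 ≤ c_2 such that for every n ∈ ℕ, if R_n > 0 is chosen so that πR_n^2 = 3^{n/2}, then c_1·(2/3)^{n/2} ≤ sup_{k∈ℕ} ∫_{C_n(πR_n^2)} (r^k/k!) e^{-r} dr ≤ c_2·(2/3)^{n/2}; that is, under the scaling 3^n = (πR^2)^2 the operator norm of the Daubechies operator localizing on the n-iterate spherically symmetric Cantor set decays like (2/3)^{n/2}. -/

import Mathlib

open Real MeasureTheory Set

/-- The `n`-iterate mid-third Cantor set based in `[0, L]`:
`C₀(L) = [0,L]` and `C_{n+1}(L) = (1/3)·C_n(L) ∪ (2L/3 + (1/3)·C_n(L))`. -/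
def cantorIterate : ℕ → ℝ → Set ℝ
  | 0, L => Set.Icc 0 L
  | n + 1, L =>
      (fun x => x / 3) '' cantorIterate n L ∪
        (fun x => 2 * L / 3 + x / 3) '' cantorIterate n L

lemma cantor_succ (n : ℕ) (L : ℝ) :
    cantorIterate (n + 1) L =
      (fun x => x / 3) '' cantorIterate n L ∪
        (fun x => 2 * L / 3 + x / 3) '' cantorIterate n L := rfl

lemma img_div3 (S : Set ℝ) :
    (fun x : ℝ => x / 3) '' S = (fun y : ℝ => 3 * y + 0) ⁻¹' S := by
  ext y
  constructor
  · rintro ⟨x, hx, rfl⟩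
    show 3 * (x / 3) + 0 ∈ S
    have : 3 * (x / 3) + 0 = x := by ring
    rwa [this]
  · intro h
    exact ⟨3 * y + 0, h, by ring⟩

lemma img_aff3 (L : ℝ) (S : Set ℝ) :
    (fun x : ℝ => 2 * L / 3 + x / 3) '' S = (fun y : ℝ => 3 * y + -(2 * L)) ⁻¹' S := by
  ext y
  constructor
  · rintro ⟨x, hx, rfl⟩
    show 3 * (2 * L / 3 + x / 3) + -(2 * L) ∈ S
    have : 3 * (2 * L / 3 + x / 3) + -(2 * L) = x := by ring
    rwa [this]
  · intro h
    exact ⟨3 * y + -(2 * L), h, by ring⟩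

lemma cantor_measurable (n : ℕ) (L : ℝ) : MeasurableSet (cantorIterate n L) := by
  induction n with
  | zero => exact measurableSet_Icc
  | succ n ih =>
    rw [cantor_succ, img_div3, img_aff3]
    exact (ih.preimage ((measurable_const_mul 3).add_const 0)).union
      (ih.preimage ((measurable_const_mul 3).add_const _))

lemma cantor_subset {L : ℝ} (hL : 0 ≤ L) (n : ℕ) : cantorIterate n L ⊆ Set.Icc 0 L := by
  induction n with
  | zero => exact subset_rfl
  | succ n ih =>
    rintro y (⟨x, hx, rfl⟩ | ⟨x, hx, rfl⟩) <;>
      obtain ⟨h0, h1⟩ := ih hx <;> constructor <;> simp only [] <;> linarith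

lemma vol_preimage_three (b : ℝ) (A : Set ℝ) :
    volume ((fun y : ℝ => 3 * y + b) ⁻¹' A) = ENNReal.ofReal (3 : ℝ)⁻¹ * volume A := by
  have h : (fun y : ℝ => 3 * y + b) ⁻¹' A
      = (fun y : ℝ => 3 * y) ⁻¹' ((fun z : ℝ => z + b) ⁻¹' A) := rfl
  rw [h, Real.volume_preimage_mul_left (by norm_num : (3:ℝ) ≠ 0),
    measure_preimage_add_right volume b A]
  norm_num [abs_of_nonneg]

lemma cantor_volume (n : ℕ) {L : ℝ} (hL : 0 ≤ L) :
    volume (cantorIterate n L) = ENNReal.ofReal ((2/3 : ℝ) ^ n * L) := by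
  induction n with
  | zero =>
    simp [cantorIterate, Real.volume_Icc]
  | succ n ih =>
    rcases hL.eq_or_lt with h0 | hpos
    · have hsub := cantor_subset hL (n + 1)
      rw [← h0] at hsub ⊢
      have : volume (cantorIterate (n+1) 0) ≤ volume (Set.Icc (0:ℝ) 0) := measure_mono hsub
      simp only [Set.Icc_self, Real.volume_singleton, le_zero_iff] at this
      simp [this]
    · rw [cantor_succ, img_div3, img_aff3]
      have hd : Disjoint ((fun y : ℝ => 3 * y + 0) ⁻¹' cantorIterate n L)
          ((fun y : ℝ => 3 * y + -(2 * L)) ⁻¹' cantorIterate n L) := by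
        rw [Set.disjoint_left]
        rintro y h1 h2
        have g1 := (cantor_subset hL n h1).2
        have g2 := (cantor_subset hL n h2).1
        simp only [Set.mem_preimage] at g1 g2 ⊢
        linarith
      rw [measure_union hd ((cantor_measurable n L).preimage
        ((measurable_const_mul 3).add_const _)), vol_preimage_three, vol_preimage_three, ih,
        ← ENNReal.ofReal_mul (by norm_num),
        ← ENNReal.ofReal_add (by positivity) (by positivity)]
      congr 1
      ring


lemma preimage_aff_Icc (b t l : ℝ) :
    (fun y : ℝ => 3 * y + b) ⁻¹' Set.Icc (3 * t + b) (3 * t + b + 3 * l) = Set.Icc t (t + l) := by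
  ext y
  simp only [Set.mem_preimage, Set.mem_Icc]
  constructor <;> rintro ⟨h1, h2⟩ <;> constructor <;> linarith

lemma vol_child_inter (S : Set ℝ) (b t l : ℝ) :
    volume ((fun y : ℝ => 3 * y + b) ⁻¹' S ∩ Set.Icc t (t + l)) =
      ENNReal.ofReal (3 : ℝ)⁻¹ * volume (S ∩ Set.Icc (3 * t + b) (3 * t + b + 3 * l)) := by
  rw [← preimage_aff_Icc b t l, ← Set.preimage_inter, vol_preimage_three]

lemma cantor_window : ∀ (n : ℕ) {L : ℝ}, 0 ≤ L → ∀ (j : ℕ), j ≤ n → ∀ t : ℝ,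
    volume (cantorIterate n L ∩ Set.Icc t (t + L / 3 ^ j)) ≤
      ENNReal.ofReal (2 * (2/3 : ℝ) ^ (n - j) * (L / 3 ^ j)) := by
  intro n
  induction n with
  | zero =>
    intro L hL j hj t
    interval_cases j
    calc volume (cantorIterate 0 L ∩ Set.Icc t (t + L / 3 ^ 0))
        ≤ volume (cantorIterate 0 L) := measure_mono Set.inter_subset_left
      _ = ENNReal.ofReal L := by simp [cantorIterate, Real.volume_Icc]
      _ ≤ _ := by
          apply ENNReal.ofReal_le_ofReal
          simp only [pow_zero, Nat.zero_sub]
          linarith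
  | succ n ih =>
    intro L hL j hj t
    match j with
    | 0 =>
      calc volume (cantorIterate (n+1) L ∩ Set.Icc t (t + L / 3 ^ 0))
          ≤ volume (cantorIterate (n+1) L) := measure_mono Set.inter_subset_left
        _ = ENNReal.ofReal ((2/3 : ℝ) ^ (n+1) * L) := cantor_volume (n+1) hL
        _ ≤ _ := by
            apply ENNReal.ofReal_le_ofReal
            have : (0:ℝ) ≤ (2/3 : ℝ) ^ (n+1) * L := by positivity
            simp only [Nat.sub_zero, pow_zero]
            nlinarith
    | (j' + 1) =>
      have hj' : j' ≤ n := Nat.succ_le_succ_iff.mp hj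
      have hl3 : L / 3 ^ (j' + 1) ≤ L / 3 := by
        apply div_le_div_of_nonneg_left hL (by norm_num) ?_ |>.trans_eq rfl
        calc (3:ℝ) = 3 ^ 1 := (pow_one 3).symm
          _ ≤ 3 ^ (j' + 1) := by
              apply pow_le_pow_right₀ (by norm_num) (Nat.succ_le_succ (Nat.zero_le _))
      have key : ∀ b : ℝ, volume ((fun y : ℝ => 3 * y + b) ⁻¹' cantorIterate n L
          ∩ Set.Icc t (t + L / 3 ^ (j' + 1))) ≤
          ENNReal.ofReal (2 * (2/3 : ℝ) ^ (n + 1 - (j' + 1)) * (L / 3 ^ (j' + 1))) := by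
        intro b
        have h3 : (3:ℝ) * (L / 3 ^ (j' + 1)) = L / 3 ^ j' := by
          rw [pow_succ]
          field_simp
        calc volume ((fun y : ℝ => 3 * y + b) ⁻¹' cantorIterate n L
              ∩ Set.Icc t (t + L / 3 ^ (j' + 1)))
            = ENNReal.ofReal (3 : ℝ)⁻¹ * volume (cantorIterate n L ∩
                Set.Icc (3 * t + b) (3 * t + b + 3 * (L / 3 ^ (j' + 1)))) :=
              vol_child_inter _ b t _
          _ ≤ ENNReal.ofReal (3 : ℝ)⁻¹ *
                ENNReal.ofReal (2 * (2/3 : ℝ) ^ (n - j') * (L / 3 ^ j')) := by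
              gcongr
              rw [h3]
              exact ih hL j' hj' (3 * t + b)
          _ = ENNReal.ofReal (2 * (2/3 : ℝ) ^ (n + 1 - (j' + 1)) * (L / 3 ^ (j' + 1))) := by
              rw [← ENNReal.ofReal_mul (by norm_num)]
              congr 1
              have h4 : n + 1 - (j' + 1) = n - j' := by omega
              rw [h4, pow_succ]
              ring
      rw [cantor_succ, img_div3, img_aff3, Set.union_inter_distrib_right]
      refine (measure_union_le _ _).trans ?_
      by_cases hc : t + L / 3 ^ (j' + 1) < 2 * L / 3
      · have h2 : volume ((fun y : ℝ => 3 * y + -(2 * L)) ⁻¹' cantorIterate n L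
            ∩ Set.Icc t (t + L / 3 ^ (j' + 1))) = 0 := by
          refine measure_mono_null ?_ measure_empty
          rintro y ⟨h1, hy1, hy2⟩
          simp only [Set.mem_preimage] at h1
          have := (cantor_subset hL n h1).1
          simp only [Set.mem_empty_iff_false]
          linarith
        rw [h2, add_zero]
        exact key 0
      · push_neg at hc
        have ht : L / 3 ≤ t := by linarith
        have h1 : volume ((fun y : ℝ => 3 * y + 0) ⁻¹' cantorIterate n L
            ∩ Set.Icc t (t + L / 3 ^ (j' + 1))) = 0 := by
          have hsub : (fun y : ℝ => 3 * y + 0) ⁻¹' cantorIterate n L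
              ∩ Set.Icc t (t + L / 3 ^ (j' + 1)) ⊆ Set.Icc t (L / 3) := by
            rintro y ⟨hy1, hy2, hy3⟩
            simp only [Set.mem_preimage] at hy1
            have := (cantor_subset hL n hy1).2
            exact ⟨hy2, by linarith⟩
          refine le_antisymm ?_ (zero_le)
          calc volume _ ≤ volume (Set.Icc t (L / 3)) := measure_mono hsub
            _ = ENNReal.ofReal (L / 3 - t) := Real.volume_Icc
            _ = 0 := by rw [ENNReal.ofReal_eq_zero]; linarith
        rw [h1, zero_add]
        exact key (-(2 * L))

lemma img_div3j (j : ℕ) (S : Set ℝ) :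
    (fun x : ℝ => x / 3 ^ j) '' S = (fun y : ℝ => (3:ℝ) ^ j * y) ⁻¹' S := by
  have h3 : (3:ℝ) ^ j ≠ 0 := by positivity
  ext y
  constructor
  · rintro ⟨x, hx, rfl⟩
    show (3:ℝ) ^ j * (x / 3 ^ j) ∈ S
    rwa [mul_div_cancel₀ _ h3]
  · intro h
    exact ⟨(3:ℝ) ^ j * y, h, by field_simp⟩

lemma cantor_left (j m : ℕ) (L : ℝ) :
    (fun x : ℝ => x / 3 ^ j) '' cantorIterate m L ⊆ cantorIterate (m + j) L := by
  induction j with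
  | zero => simp
  | succ j ih =>
    rintro y ⟨x, hx, rfl⟩
    have hmem : x / 3 ^ j ∈ cantorIterate (m + j) L := ih ⟨x, hx, rfl⟩
    rw [show m + (j + 1) = (m + j) + 1 from rfl, cantor_succ]
    refine Or.inl ⟨x / 3 ^ j, hmem, ?_⟩
    show x / 3 ^ j / 3 = x / 3 ^ (j + 1)
    ring


lemma F_hasDerivAt (k : ℕ) (x : ℝ) :
    HasDerivAt (fun r : ℝ => r ^ k * Real.exp (-r))
      ((k : ℝ) * x ^ (k - 1) * Real.exp (-x) + x ^ k * (Real.exp (-x) * -1)) x := by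
  have h1 : HasDerivAt (fun r : ℝ => r ^ k) ((k : ℝ) * x ^ (k - 1)) x := hasDerivAt_pow k x
  have h2 : HasDerivAt (fun r : ℝ => Real.exp (-r)) (Real.exp (-x) * -1) x := by
    exact (Real.hasDerivAt_exp (-x)).comp x (hasDerivAt_neg x)
  exact h1.mul h2

lemma F_monoOn (k : ℕ) :
    MonotoneOn (fun r : ℝ => r ^ k * Real.exp (-r)) (Set.Icc 0 (k : ℝ)) := by
  apply monotoneOn_of_deriv_nonneg (convex_Icc _ _)
  · exact ((continuous_pow k).mul (Real.continuous_exp.comp continuous_neg)).continuousOn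
  · intro x _
    exact (F_hasDerivAt k x).differentiableAt.differentiableWithinAt
  · intro x hx
    rw [interior_Icc] at hx
    rw [(F_hasDerivAt k x).deriv]
    obtain ⟨m, rfl⟩ : ∃ m, k = m + 1 := by
      cases k with
      | zero => exact absurd (hx.1.trans hx.2) (by norm_num)
      | succ m => exact ⟨m, rfl⟩
    have h1 : 0 < x := hx.1
    have h2 : x < (m : ℝ) + 1 := by exact_mod_cast hx.2
    have h3 : (0:ℝ) < Real.exp (-x) := Real.exp_pos _
    have h4 : (0:ℝ) ≤ x ^ m := pow_nonneg h1.le m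
    have h5 : x ^ (m + 1) = x ^ m * x := pow_succ x m
    simp only [Nat.add_sub_cancel, Nat.cast_add, Nat.cast_one]
    have heq : ((m:ℝ) + 1) * x ^ m * Real.exp (-x) + x ^ (m + 1) * (Real.exp (-x) * -1)
        = x ^ m * Real.exp (-x) * (((m:ℝ) + 1) - x) := by rw [h5]; ring
    rw [heq]
    exact mul_nonneg (mul_nonneg h4 h3.le) (by linarith)

lemma F_antiOn (k : ℕ) :
    AntitoneOn (fun r : ℝ => r ^ k * Real.exp (-r)) (Set.Ici (k : ℝ)) := by
  apply antitoneOn_of_deriv_nonpos (convex_Ici _)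
  · exact ((continuous_pow k).mul (Real.continuous_exp.comp continuous_neg)).continuousOn
  · intro x _
    exact (F_hasDerivAt k x).differentiableAt.differentiableWithinAt
  · intro x hx
    rw [interior_Ici] at hx
    rw [(F_hasDerivAt k x).deriv]
    have h3 : (0:ℝ) < Real.exp (-x) := Real.exp_pos _
    cases k with
    | zero => simp only [Nat.cast_zero, zero_mul, pow_zero, one_mul]; nlinarith
    | succ m =>
      have h1 : ((m : ℝ) + 1) < x := by exact_mod_cast hx
      have h0 : (0:ℝ) < x := lt_trans (by positivity) h1
      have h4 : (0:ℝ) ≤ x ^ m := pow_nonneg h0.le m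
      have h5 : x ^ (m + 1) = x ^ m * x := pow_succ x m
      simp only [Nat.add_sub_cancel, Nat.cast_add, Nat.cast_one]
      have heq : ((m:ℝ) + 1) * x ^ m * Real.exp (-x) + x ^ (m + 1) * (Real.exp (-x) * -1)
          = x ^ m * Real.exp (-x) * (((m:ℝ) + 1) - x) := by rw [h5]; ring
      rw [heq]
      exact mul_nonpos_of_nonneg_of_nonpos (mul_nonneg h4 h3.le) (by linarith)

lemma F_le_factorial (k : ℕ) {r : ℝ} (hr : 0 ≤ r) :
    r ^ k * Real.exp (-r) ≤ (k.factorial : ℝ) := by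
  have hk : (0:ℝ) < (k.factorial : ℝ) := by exact_mod_cast k.factorial_pos
  have h1 : r ^ k / (k.factorial : ℝ) ≤ Real.exp r := by
    calc r ^ k / (k.factorial : ℝ)
        ≤ ∑ i ∈ Finset.range (k + 1), r ^ i / (i.factorial : ℝ) := by
          apply Finset.single_le_sum (f := fun i => r ^ i / (i.factorial : ℝ))
            (fun i _ => by positivity) (Finset.self_mem_range_succ k)
      _ ≤ Real.exp r := Real.sum_le_exp_of_nonneg hr _
  have h2 : r ^ k ≤ (k.factorial : ℝ) * Real.exp r := by
    have := (div_le_iff₀ hk).mp h1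
    linarith
  calc r ^ k * Real.exp (-r) ≤ ((k.factorial : ℝ) * Real.exp r) * Real.exp (-r) :=
        mul_le_mul_of_nonneg_right h2 (Real.exp_nonneg _)
    _ = (k.factorial : ℝ) := by rw [mul_assoc, ← Real.exp_add]; simp

lemma F_integrableOn_Ioi (k : ℕ) :
    IntegrableOn (fun r : ℝ => r ^ k * Real.exp (-r)) (Set.Ioi 0) := by
  have h := Real.GammaIntegral_convergent (s := (k : ℝ) + 1) (by positivity)
  apply h.congr_fun ?_ measurableSet_Ioi
  intro x hx
  simp only [add_sub_cancel_right, Real.rpow_natCast]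
  ring

lemma F_integral_Ioi (k : ℕ) :
    ∫ r in Set.Ioi (0:ℝ), r ^ k * Real.exp (-r) = (k.factorial : ℝ) := by
  have h := Real.Gamma_eq_integral (s := (k : ℝ) + 1) (by positivity)
  calc ∫ r in Set.Ioi (0:ℝ), r ^ k * Real.exp (-r)
      = ∫ x in Set.Ioi (0:ℝ), Real.exp (-x) * x ^ ((k : ℝ) + 1 - 1) := by
        apply setIntegral_congr_fun measurableSet_Ioi
        intro x _
        simp only [add_sub_cancel_right, Real.rpow_natCast]
        ring
    _ = Real.Gamma ((k : ℝ) + 1) := h.symm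
    _ = (k.factorial : ℝ) := by exact_mod_cast Real.Gamma_nat_eq_factorial k

lemma sum_F_le (k M : ℕ) :
    ∑ i ∈ Finset.range M, ((i : ℝ) ^ k * Real.exp (-(i : ℝ))) ≤ 3 * (k.factorial : ℝ) := by
  classical
  set F : ℝ → ℝ := fun r => r ^ k * Real.exp (-r) with hF
  have hFnn : ∀ r : ℝ, 0 ≤ r → 0 ≤ F r := fun r hr =>
    mul_nonneg (pow_nonneg hr k) (Real.exp_nonneg _)
  have hFae : 0 ≤ᵐ[volume.restrict (Set.Ioi (0:ℝ))] F :=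
    (ae_restrict_iff' measurableSet_Ioi).mpr
      (Filter.Eventually.of_forall fun x hx => hFnn x (le_of_lt hx))
  -- the "< k" part
  have hA : ∀ s : Finset ℕ, (∀ i ∈ s, i < k) →
      ∑ i ∈ s, F (i:ℝ) ≤ (k.factorial : ℝ) := by
    intro s hs
    have hsub : (⋃ i ∈ s, Set.Ioc (i:ℝ) ((i:ℝ)+1)) ⊆ Set.Ioi (0:ℝ) := by
      intro x hx
      simp only [Set.mem_iUnion, Set.mem_Ioc] at hx
      obtain ⟨i, _, h1, _⟩ := hx
      exact lt_of_le_of_lt (Nat.cast_nonneg i) h1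
    calc ∑ i ∈ s, F (i:ℝ)
        ≤ ∑ i ∈ s, ∫ r in Set.Ioc (i:ℝ) ((i:ℝ)+1), F r := by
          apply Finset.sum_le_sum
          intro i hi
          have hik : i < k := hs i hi
          have hIsub : Set.Ioc (i:ℝ) ((i:ℝ)+1) ⊆ Set.Ioi 0 := fun x hx =>
            lt_of_le_of_lt (Nat.cast_nonneg i) hx.1
          have := setIntegral_ge_of_const_le (c := F (i:ℝ)) (f := F)
            measurableSet_Ioc (by simp [Real.volume_Ioc]) ?_
            ((F_integrableOn_Ioi k).mono_set hIsub)
          · have hv : (volume (Set.Ioc (i:ℝ) ((i:ℝ)+1))).toReal = 1 := by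
              simp [Real.volume_Ioc]
            rw [measureReal_def, hv, one_smul] at this
            exact this
          · intro x hx
            apply F_monoOn k ⟨Nat.cast_nonneg i, by exact_mod_cast hik.le⟩
              ⟨le_trans (Nat.cast_nonneg i) hx.1.le, le_trans hx.2 (by exact_mod_cast hik)⟩
              hx.1.le
      _ = ∫ r in ⋃ i ∈ s, Set.Ioc (i:ℝ) ((i:ℝ)+1), F r := by
          refine (integral_biUnion_finset s (fun i _ => measurableSet_Ioc) ?_
            (fun i _ => (F_integrableOn_Ioi k).mono_set
              (fun x hx => lt_of_le_of_lt (Nat.cast_nonneg i) hx.1))).symm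
          intro i _ j _ hij
          simp only [Function.onFun, Set.Ioc_disjoint_Ioc]
          rcases hij.lt_or_gt with h | h
          · exact min_le_of_left_le (le_trans (by exact_mod_cast h) (le_max_right _ _))
          · exact min_le_of_right_le (le_trans (by exact_mod_cast h) (le_max_left _ _))
      _ ≤ ∫ r in Set.Ioi (0:ℝ), F r :=
          setIntegral_mono_set (F_integrableOn_Ioi k) hFae hsub.eventuallyLE
      _ = (k.factorial : ℝ) := F_integral_Ioi k
  -- the "> k" part
  have hC : ∀ s : Finset ℕ, (∀ i ∈ s, k < i) →
      ∑ i ∈ s, F (i:ℝ) ≤ (k.factorial : ℝ) := by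
    intro s hs
    have hsub : (⋃ i ∈ s, Set.Ioc ((i:ℝ)-1) (i:ℝ)) ⊆ Set.Ioi (0:ℝ) := by
      intro x hx
      simp only [Set.mem_iUnion, Set.mem_Ioc] at hx
      obtain ⟨i, hi, h1, _⟩ := hx
      have h1n : 1 ≤ i := lt_of_le_of_lt (Nat.zero_le k) (hs i hi)
      have : (1:ℝ) ≤ (i:ℝ) := by exact_mod_cast h1n
      simp only [Set.mem_Ioi]
      linarith
    calc ∑ i ∈ s, F (i:ℝ)
        ≤ ∑ i ∈ s, ∫ r in Set.Ioc ((i:ℝ)-1) (i:ℝ), F r := by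
          apply Finset.sum_le_sum
          intro i hi
          have hik : k < i := hs i hi
          have hk1 : (k:ℝ) ≤ (i:ℝ) - 1 := by
            have : (k:ℝ) + 1 ≤ (i:ℝ) := by exact_mod_cast hik
            linarith
          have hIsub : Set.Ioc ((i:ℝ)-1) (i:ℝ) ⊆ Set.Ioi 0 := fun x hx => by
            have := hx.1
            have h0 : (0:ℝ) ≤ (k:ℝ) := Nat.cast_nonneg k
            simp only [Set.mem_Ioi]
            linarith
          have := setIntegral_ge_of_const_le (c := F (i:ℝ)) (f := F)
            measurableSet_Ioc (by simp [Real.volume_Ioc]) ?_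
            ((F_integrableOn_Ioi k).mono_set hIsub)
          · have hv : (volume (Set.Ioc ((i:ℝ)-1) (i:ℝ))).toReal = 1 := by
              simp [Real.volume_Ioc]
            rw [measureReal_def, hv, one_smul] at this
            exact this
          · intro x hx
            exact F_antiOn k (Set.mem_Ici.mpr (le_trans hk1 hx.1.le))
              (Set.mem_Ici.mpr (by exact_mod_cast hik.le)) hx.2
      _ = ∫ r in ⋃ i ∈ s, Set.Ioc ((i:ℝ)-1) (i:ℝ), F r := by
          refine (integral_biUnion_finset s (fun i _ => measurableSet_Ioc) ?_
            (fun i hi => (F_integrableOn_Ioi k).mono_set (fun x hx => by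
              have h1n : 1 ≤ i := lt_of_le_of_lt (Nat.zero_le k) (hs i hi)
              have h1 : (1:ℝ) ≤ (i:ℝ) := by exact_mod_cast h1n
              have := hx.1
              simp only [Set.mem_Ioi]
              linarith))).symm
          intro i _ j _ hij
          simp only [Function.onFun, Set.Ioc_disjoint_Ioc]
          rcases hij.lt_or_gt with h | h
          · refine min_le_of_left_le (le_trans ?_ (le_max_right _ _))
            have : (i:ℝ) + 1 ≤ (j:ℝ) := by exact_mod_cast h
            linarith
          · refine min_le_of_right_le (le_trans ?_ (le_max_left _ _))
            have : (j:ℝ) + 1 ≤ (i:ℝ) := by exact_mod_cast h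
            linarith
      _ ≤ ∫ r in Set.Ioi (0:ℝ), F r :=
          setIntegral_mono_set (F_integrableOn_Ioi k) hFae hsub.eventuallyLE
      _ = (k.factorial : ℝ) := F_integral_Ioi k
  -- combine
  have hsplit1 := Finset.sum_filter_add_sum_filter_not (Finset.range M)
    (fun i => i < k) (fun i => F (i:ℝ))
  have hsplit2 := Finset.sum_filter_add_sum_filter_not
    ((Finset.range M).filter (fun i => ¬ i < k)) (fun i => i = k) (fun i => F (i:ℝ))
  have hB : ∑ i ∈ ((Finset.range M).filter (fun i => ¬ i < k)).filter (fun i => i = k),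
      F (i:ℝ) ≤ (k.factorial : ℝ) := by
    have hsub : ((Finset.range M).filter (fun i => ¬ i < k)).filter (fun i => i = k)
        ⊆ {k} := by
      intro i hi
      simp only [Finset.mem_filter] at hi
      simp [hi.2]
    calc _ ≤ ∑ i ∈ ({k} : Finset ℕ), F (i:ℝ) :=
          Finset.sum_le_sum_of_subset_of_nonneg hsub
            (fun i _ _ => hFnn _ (Nat.cast_nonneg i))
      _ = F (k:ℝ) := Finset.sum_singleton _ _
      _ ≤ (k.factorial : ℝ) := F_le_factorial k (Nat.cast_nonneg k)
  have hA' := hA ((Finset.range M).filter (fun i => i < k))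
    (fun i hi => (Finset.mem_filter.mp hi).2)
  have hC' := hC (((Finset.range M).filter (fun i => ¬ i < k)).filter (fun i => ¬ i = k))
    (fun i hi => by
      have h1 := Finset.mem_filter.mp hi
      have h2 := Finset.mem_filter.mp h1.1
      omega)
  have hEq : ∑ i ∈ Finset.range M, ((i : ℝ) ^ k * Real.exp (-(i : ℝ)))
      = ∑ i ∈ Finset.range M, F (i:ℝ) := rfl
  rw [hEq]
  linarith [hsplit1, hsplit2, hA', hB, hC']


lemma key_upper (n k : ℕ) :
    ∫ r in cantorIterate n ((3:ℝ) ^ ((n:ℝ)/2)), r ^ k / (Nat.factorial k) * Real.exp (-r)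
      ≤ 12 * Real.sqrt 3 * (2/3 : ℝ) ^ ((n:ℝ)/2) := by
  set L : ℝ := (3:ℝ) ^ ((n:ℝ)/2) with hLdef
  have hL : 0 < L := Real.rpow_pos_of_pos (by norm_num) _
  set f : ℝ → ℝ := fun r => r ^ k / (Nat.factorial k) * Real.exp (-r) with hfdef
  set F : ℝ → ℝ := fun r => r ^ k * Real.exp (-r) with hFdef
  have hkfac : (0:ℝ) < (Nat.factorial k : ℝ) := by exact_mod_cast k.factorial_pos
  have hcont : Continuous f := by
    apply Continuous.mul
    · exact (continuous_pow k).div_const _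
    · exact Real.continuous_exp.comp continuous_neg
  set N : ℕ := ⌈L⌉₊ + 1 with hNdef
  have hLN : L < (N : ℝ) := by
    have := Nat.le_ceil L
    push_cast [hNdef]
    linarith
  set A : ℕ → Set ℝ := fun i => cantorIterate n L ∩ Set.Ico (i:ℝ) ((i:ℝ)+1) with hAdef
  have hAmeas : ∀ i, MeasurableSet (A i) := fun i =>
    (cantor_measurable n L).inter measurableSet_Ico
  have hAsub : ∀ i, A i ⊆ Set.Icc 0 L := fun i =>
    Set.inter_subset_left.trans (cantor_subset hL.le n)
  have hIntIcc : IntegrableOn f (Set.Icc 0 L) := hcont.integrableOn_Icc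
  have hAint : ∀ i, IntegrableOn f (A i) := fun i => hIntIcc.mono_set (hAsub i)
  have hcover : cantorIterate n L = ⋃ i ∈ Finset.range N, A i := by
    apply Set.Subset.antisymm
    · intro x hx
      obtain ⟨hx0, hxL⟩ := cantor_subset hL.le n hx
      have hiN : ⌊x⌋₊ ∈ Finset.range N := by
        rw [Finset.mem_range]
        exact (Nat.floor_lt hx0).mpr (lt_of_le_of_lt hxL hLN)
      exact Set.mem_biUnion hiN ⟨hx, Nat.floor_le hx0, Nat.lt_floor_add_one x⟩
    · exact Set.iUnion₂_subset fun i _ => Set.inter_subset_left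
  have hdisj : (↑(Finset.range N) : Set ℕ).Pairwise (Function.onFun Disjoint A) := by
    intro i _ j _ hij
    refine Set.disjoint_left.mpr ?_
    rintro x ⟨_, hxi⟩ ⟨_, hxj⟩
    rcases hij.lt_or_gt with h | h
    · have h1 : (i:ℝ) + 1 ≤ (j:ℝ) := by exact_mod_cast h
      have := hxi.2; have := hxj.1; linarith
    · have h1 : (j:ℝ) + 1 ≤ (i:ℝ) := by exact_mod_cast h
      have := hxj.2; have := hxi.1; linarith
  have hsplit : ∫ r in cantorIterate n L, f r = ∑ i ∈ Finset.range N, ∫ r in A i, f r := by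
    rw [hcover]
    exact integral_biUnion_finset _ (fun i _ => hAmeas i) hdisj (fun i _ => hAint i)
  -- window bound
  set j0 : ℕ := n / 2 with hj0def
  have hj0n : j0 ≤ n := Nat.div_le_self n 2
  have hwrpow : L / 3 ^ j0 = (3:ℝ) ^ ((n:ℝ)/2 - (j0:ℝ)) := by
    rw [Real.rpow_sub (by norm_num), Real.rpow_natCast]
  have hwge1 : 1 ≤ L / 3 ^ j0 := by
    rw [hwrpow]
    calc (1:ℝ) = (3:ℝ) ^ (0:ℝ) := (Real.rpow_zero 3).symm
      _ ≤ (3:ℝ) ^ ((n:ℝ)/2 - (j0:ℝ)) := by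
          apply Real.rpow_le_rpow_of_exponent_le (by norm_num)
          have h1 : j0 * 2 ≤ n := by omega
          have h2 : (j0:ℝ) * 2 ≤ (n:ℝ) := by exact_mod_cast h1
          linarith
  have hwle : L / 3 ^ j0 ≤ Real.sqrt 3 := by
    rw [hwrpow, Real.sqrt_eq_rpow]
    apply Real.rpow_le_rpow_of_exponent_le (by norm_num)
    have h1 : n ≤ 2 * j0 + 1 := by omega
    have h2 : (n:ℝ) ≤ 2 * (j0:ℝ) + 1 := by exact_mod_cast h1
    linarith
  have hpow23 : ((2:ℝ)/3) ^ (n - j0) ≤ (2/3 : ℝ) ^ ((n:ℝ)/2) := by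
    rw [← Real.rpow_natCast (2/3 : ℝ) (n - j0)]
    apply Real.rpow_le_rpow_of_exponent_ge (by norm_num) (by norm_num)
    have h1 : n ≤ 2 * (n - j0) := by omega
    have h2 : (n:ℝ) ≤ 2 * ((n - j0 : ℕ) : ℝ) := by exact_mod_cast h1
    linarith
  set B : ℝ := 2 * Real.sqrt 3 * (2/3 : ℝ) ^ ((n:ℝ)/2) with hBdef
  have h23pos : (0:ℝ) < (2/3 : ℝ) ^ ((n:ℝ)/2) := Real.rpow_pos_of_pos (by norm_num) _
  have hsqrt3 : (1:ℝ) ≤ Real.sqrt 3 := by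
    rw [show (1:ℝ) = Real.sqrt 1 from (Real.sqrt_one).symm]
    exact Real.sqrt_le_sqrt (by norm_num)
  have hBnn : 0 ≤ B := by positivity
  have hvol : ∀ i : ℕ, (volume (A i)).toReal ≤ B := by
    intro i
    have hsub2 : A i ⊆ cantorIterate n L ∩ Set.Icc (i:ℝ) ((i:ℝ) + L / 3 ^ j0) := by
      rintro x ⟨hx1, hx2, hx3⟩
      exact ⟨hx1, hx2, by linarith⟩
    have hle : volume (A i) ≤ ENNReal.ofReal (2 * (2/3 : ℝ) ^ (n - j0) * (L / 3 ^ j0)) :=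
      (measure_mono hsub2).trans (cantor_window n hL.le j0 hj0n (i:ℝ))
    have hreal : 2 * (2/3 : ℝ) ^ (n - j0) * (L / 3 ^ j0) ≤ B := by
      rw [hBdef]
      have h2 : (0:ℝ) ≤ L / 3 ^ j0 := by positivity
      calc 2 * (2/3 : ℝ) ^ (n - j0) * (L / 3 ^ j0)
          ≤ 2 * (2/3 : ℝ) ^ ((n:ℝ)/2) * Real.sqrt 3 := by
            apply mul_le_mul (by nlinarith) hwle h2
            positivity
        _ = 2 * Real.sqrt 3 * (2/3 : ℝ) ^ ((n:ℝ)/2) := by ring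
    calc (volume (A i)).toReal
        ≤ 2 * (2/3 : ℝ) ^ (n - j0) * (L / 3 ^ j0) :=
          ENNReal.toReal_le_of_le_ofReal (by positivity) hle
      _ ≤ B := hreal
  -- per piece bound
  set s : ℕ → ℝ := fun i => max (F (i:ℝ)) (F ((i:ℝ)+1)) with hsdef
  have hFnn : ∀ r : ℝ, 0 ≤ r → 0 ≤ F r := fun r hr =>
    mul_nonneg (pow_nonneg hr k) (Real.exp_nonneg _)
  have hsnn : ∀ i : ℕ, 0 ≤ s i := fun i =>
    le_trans (hFnn (i:ℝ) (Nat.cast_nonneg i)) (le_max_left _ _)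
  have hpiece : ∀ i : ℕ, ∫ r in A i, f r ≤ s i / (Nat.factorial k) * B := by
    intro i
    have hfin : volume (A i) < ⊤ :=
      lt_of_le_of_lt (measure_mono (hAsub i)) measure_Icc_lt_top
    have hptwise : ∀ x ∈ A i, ‖f x‖ ≤ s i / (Nat.factorial k) := by
      intro x hx
      obtain ⟨hxc, hxi, hxi1⟩ := hx
      have hx0 : 0 ≤ x := le_trans (Nat.cast_nonneg i) hxi
      have hfx : f x = F x / (Nat.factorial k) := by
        show x ^ k / (Nat.factorial k) * Real.exp (-x) = x ^ k * Real.exp (-x) / _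
        ring
      have hFle : F x ≤ s i := by
        rcases le_or_gt (i + 1) k with h | h
        · have hik : ((i:ℝ) + 1) ≤ (k:ℝ) := by exact_mod_cast h
          refine le_trans ?_ (le_max_right _ _)
          exact F_monoOn k ⟨hx0, by linarith⟩ ⟨by linarith [Nat.cast_nonneg (α := ℝ) i], hik⟩
            hxi1.le
        · have hik : (k:ℝ) ≤ (i:ℝ) := by exact_mod_cast Nat.lt_succ_iff.mp h
          refine le_trans ?_ (le_max_left _ _)
          exact F_antiOn k (Set.mem_Ici.mpr hik)
            (Set.mem_Ici.mpr (le_trans hik hxi)) hxi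
      rw [Real.norm_eq_abs, abs_of_nonneg (by
          rw [hfx]; exact div_nonneg (hFnn x hx0) hkfac.le), hfx]
      gcongr
    have := norm_setIntegral_le_of_norm_le_const (C := s i / (Nat.factorial k)) hfin
      hptwise
    calc ∫ r in A i, f r ≤ ‖∫ r in A i, f r‖ := le_abs_self _
      _ ≤ s i / (Nat.factorial k) * (volume (A i)).toReal := this
      _ ≤ s i / (Nat.factorial k) * B := by
          apply mul_le_mul_of_nonneg_left (hvol i)
          exact div_nonneg (hsnn i) hkfac.le
  -- sum bound
  have hsum : ∑ i ∈ Finset.range N, s i ≤ 6 * (Nat.factorial k : ℝ) := by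
    have h1 : ∀ i : ℕ, s i ≤ F (i:ℝ) + F ((i:ℝ)+1) := fun i =>
      max_le_add_of_nonneg (hFnn _ (Nat.cast_nonneg i))
        (hFnn _ (by positivity))
    have h2 : ∑ i ∈ Finset.range N, F (i:ℝ) ≤ 3 * (Nat.factorial k : ℝ) := sum_F_le k N
    have h3 : ∑ i ∈ Finset.range N, F ((i:ℝ)+1) ≤ 3 * (Nat.factorial k : ℝ) := by
      have hc : ∀ i : ℕ, F ((i:ℝ)+1) = F (((i+1 : ℕ)):ℝ) := fun i => by push_cast; rfl
      have hrw : ∑ i ∈ Finset.range N, F ((i:ℝ)+1)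
          = ∑ i ∈ Finset.range N, F (((i+1 : ℕ)):ℝ) := by
        exact Finset.sum_congr rfl fun i _ => hc i
      have hs' := Finset.sum_range_succ' (fun i : ℕ => F (i:ℝ)) N
      have h0 : 0 ≤ F ((0:ℕ):ℝ) := hFnn _ (by norm_num)
      have h4 := sum_F_le k (N+1)
      rw [hrw]
      have : ∑ i ∈ Finset.range (N+1), F (i:ℝ)
          = (∑ i ∈ Finset.range N, F (((i+1:ℕ)):ℝ)) + F ((0:ℕ):ℝ) := hs'
      have h5 : ∑ i ∈ Finset.range (N+1), F (i:ℝ) ≤ 3 * (Nat.factorial k : ℝ) := h4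
      linarith
    calc ∑ i ∈ Finset.range N, s i ≤ ∑ i ∈ Finset.range N, (F (i:ℝ) + F ((i:ℝ)+1)) :=
          Finset.sum_le_sum fun i _ => h1 i
      _ = (∑ i ∈ Finset.range N, F (i:ℝ)) + ∑ i ∈ Finset.range N, F ((i:ℝ)+1) :=
          Finset.sum_add_distrib
      _ ≤ 6 * (Nat.factorial k : ℝ) := by linarith
  -- assemble
  calc ∫ r in cantorIterate n L, f r = ∑ i ∈ Finset.range N, ∫ r in A i, f r := hsplit
    _ ≤ ∑ i ∈ Finset.range N, s i / (Nat.factorial k) * B :=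
        Finset.sum_le_sum fun i _ => hpiece i
    _ = (∑ i ∈ Finset.range N, s i) * (B / (Nat.factorial k)) := by
        rw [Finset.sum_mul]
        exact Finset.sum_congr rfl fun i _ => by ring
    _ ≤ (6 * (Nat.factorial k : ℝ)) * (B / (Nat.factorial k)) := by
        apply mul_le_mul_of_nonneg_right hsum
        exact div_nonneg hBnn hkfac.le
    _ = 6 * B := by field_simp
    _ = 12 * Real.sqrt 3 * (2/3 : ℝ) ^ ((n:ℝ)/2) := by rw [hBdef]; ring


lemma key_lower (n : ℕ) :
    Real.exp (-1) / Real.sqrt 3 * (2/3 : ℝ) ^ ((n:ℝ)/2)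
      ≤ ∫ r in cantorIterate n ((3:ℝ) ^ ((n:ℝ)/2)),
          r ^ 0 / (Nat.factorial 0) * Real.exp (-r) := by
  set L : ℝ := (3:ℝ) ^ ((n:ℝ)/2) with hLdef
  have hL : 0 < L := Real.rpow_pos_of_pos (by norm_num) _
  have hfeq : (fun r : ℝ => r ^ 0 / (Nat.factorial 0 : ℝ) * Real.exp (-r))
      = fun r : ℝ => Real.exp (-r) := by
    funext r; norm_num
  rw [hfeq]
  set j : ℕ := (n + 1) / 2 with hjdef
  set m : ℕ := n - j with hmdef
  have hmj : m + j = n := by omega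
  have h3j : (0:ℝ) < 3 ^ j := by positivity
  set P : Set ℝ := (fun x : ℝ => x / 3 ^ j) '' cantorIterate m L with hPdef
  have hPsub : P ⊆ cantorIterate n L := by
    rw [hPdef, ← hmj]
    exact cantor_left j m L
  have hL3 : L / 3 ^ j ≤ 1 := by
    have hw : L / 3 ^ j = (3:ℝ) ^ ((n:ℝ)/2 - (j:ℝ)) := by
      rw [hLdef, Real.rpow_sub (by norm_num), Real.rpow_natCast]
    rw [hw]
    calc (3:ℝ) ^ ((n:ℝ)/2 - (j:ℝ)) ≤ (3:ℝ) ^ (0:ℝ) := by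
          apply Real.rpow_le_rpow_of_exponent_le (by norm_num)
          have h1 : n ≤ 2 * j := by omega
          have h2 : (n:ℝ) ≤ 2 * (j:ℝ) := by exact_mod_cast h1
          linarith
      _ = 1 := Real.rpow_zero 3
  have hPsub01 : P ⊆ Set.Icc 0 1 := by
    rintro y ⟨x, hx, rfl⟩
    obtain ⟨h0, h1⟩ := cantor_subset hL.le m hx
    constructor
    · positivity
    · calc x / 3 ^ j ≤ L / 3 ^ j := by gcongr
        _ ≤ 1 := hL3
  have hPmeas : MeasurableSet P := by
    rw [hPdef, img_div3j]
    exact (cantor_measurable m L).preimage (measurable_const_mul _)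
  have hvolP : (volume P).toReal = ((3:ℝ) ^ j)⁻¹ * ((2/3 : ℝ) ^ m * L) := by
    rw [hPdef, img_div3j, Real.volume_preimage_mul_left (ne_of_gt h3j),
      cantor_volume m hL.le, ← ENNReal.ofReal_mul (abs_nonneg _),
      ENNReal.toReal_ofReal (by positivity), abs_of_nonneg (by positivity)]
  have hVge : (Real.sqrt 3)⁻¹ * (2/3 : ℝ) ^ ((n:ℝ)/2)
      ≤ ((3:ℝ) ^ j)⁻¹ * ((2/3 : ℝ) ^ m * L) := by
    have heq : ((3:ℝ) ^ j)⁻¹ * ((2/3 : ℝ) ^ m * L)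
        = (3:ℝ) ^ ((n:ℝ)/2 - (j:ℝ)) * (2/3 : ℝ) ^ m := by
      rw [Real.rpow_sub (by norm_num), Real.rpow_natCast, hLdef]
      ring
    rw [heq]
    have h1 : (Real.sqrt 3)⁻¹ ≤ (3:ℝ) ^ ((n:ℝ)/2 - (j:ℝ)) := by
      have hs : (Real.sqrt 3)⁻¹ = (3:ℝ) ^ (-(1/2) : ℝ) := by
        rw [Real.rpow_neg (by norm_num), Real.sqrt_eq_rpow]
      rw [hs]
      apply Real.rpow_le_rpow_of_exponent_le (by norm_num)
      have h2 : 2 * j ≤ n + 1 := by omega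
      have h3 : 2 * (j:ℝ) ≤ (n:ℝ) + 1 := by exact_mod_cast h2
      linarith
    have h2 : (2/3 : ℝ) ^ ((n:ℝ)/2) ≤ (2/3 : ℝ) ^ m := by
      rw [← Real.rpow_natCast (2/3 : ℝ) m]
      apply Real.rpow_le_rpow_of_exponent_ge (by norm_num) (by norm_num)
      have h4 : 2 * m ≤ n := by omega
      have h5 : 2 * (m:ℝ) ≤ (n:ℝ) := by exact_mod_cast h4
      linarith
    have hp1 : (0:ℝ) < (2/3 : ℝ) ^ ((n:ℝ)/2) := Real.rpow_pos_of_pos (by norm_num) _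
    have hp2 : (0:ℝ) ≤ (Real.sqrt 3)⁻¹ := by positivity
    calc (Real.sqrt 3)⁻¹ * (2/3 : ℝ) ^ ((n:ℝ)/2)
        ≤ (3:ℝ) ^ ((n:ℝ)/2 - (j:ℝ)) * (2/3 : ℝ) ^ m :=
          mul_le_mul h1 h2 hp1.le (le_trans hp2 h1 |>.trans (le_refl _))
      _ = _ := rfl
  have hcont : Continuous fun r : ℝ => Real.exp (-r) :=
    Real.continuous_exp.comp continuous_neg
  have hPfin : volume P ≠ ⊤ :=
    ((measure_mono hPsub01).trans_lt measure_Icc_lt_top).ne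
  have hconst : ∀ r ∈ P, Real.exp (-1) ≤ Real.exp (-r) := by
    intro r hr
    obtain ⟨h0, h1⟩ := hPsub01 hr
    exact Real.exp_le_exp.mpr (by linarith)
  have hstep1 : Real.exp (-1) * (volume P).toReal ≤ ∫ r in P, Real.exp (-r) :=
    by
      have := setIntegral_ge_of_const_le hPmeas hPfin hconst
        ((hcont.integrableOn_Icc (a := 0) (b := 1)).mono_set hPsub01)
      rw [smul_eq_mul, mul_comm] at this
      exact this
  have hstep2 : ∫ r in P, Real.exp (-r) ≤ ∫ r in cantorIterate n L, Real.exp (-r) := by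
    apply setIntegral_mono_set
      ((hcont.integrableOn_Icc (a := 0) (b := L)).mono_set (cantor_subset hL.le n))
      (Filter.Eventually.of_forall fun x => Real.exp_nonneg _)
      hPsub.eventuallyLE
  calc Real.exp (-1) / Real.sqrt 3 * (2/3 : ℝ) ^ ((n:ℝ)/2)
      = Real.exp (-1) * ((Real.sqrt 3)⁻¹ * (2/3 : ℝ) ^ ((n:ℝ)/2)) := by ring
    _ ≤ Real.exp (-1) * (volume P).toReal := by
        rw [hvolP]
        exact mul_le_mul_of_nonneg_left hVge (Real.exp_nonneg _)
    _ ≤ ∫ r in P, Real.exp (-r) := hstep1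
    _ ≤ ∫ r in cantorIterate n L, Real.exp (-r) := hstep2

theorem cantor_operator_norm_decay :
    ∃ c₁ c₂ : ℝ, 0 < c₁ ∧ c₁ ≤ c₂ ∧
      ∀ n : ℕ, ∀ R : ℝ, 0 < R → π * R ^ 2 = (3 : ℝ) ^ ((n : ℝ) / 2) →
        c₁ * (2 / 3 : ℝ) ^ ((n : ℝ) / 2) ≤
            (⨆ k : ℕ, ∫ r in cantorIterate n (π * R ^ 2),
              r ^ k / (Nat.factorial k) * Real.exp (-r)) ∧
          (⨆ k : ℕ, ∫ r in cantorIterate n (π * R ^ 2),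
              r ^ k / (Nat.factorial k) * Real.exp (-r)) ≤
            c₂ * (2 / 3 : ℝ) ^ ((n : ℝ) / 2) := by
  refine ⟨Real.exp (-1) / Real.sqrt 3, 12 * Real.sqrt 3, ?_, ?_, ?_⟩
  · positivity
  · have hsqrt3 : (1:ℝ) ≤ Real.sqrt 3 := by
      rw [show (1:ℝ) = Real.sqrt 1 from (Real.sqrt_one).symm]
      exact Real.sqrt_le_sqrt (by norm_num)
    have he : Real.exp (-1) ≤ 1 := by
      calc Real.exp (-1) ≤ Real.exp 0 := Real.exp_le_exp.mpr (by norm_num)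
        _ = 1 := Real.exp_zero
    have hs0 : (0:ℝ) < Real.sqrt 3 := by positivity
    calc Real.exp (-1) / Real.sqrt 3 ≤ Real.exp (-1) := div_le_self (Real.exp_nonneg _) hsqrt3
      _ ≤ 1 := he
      _ ≤ 12 * Real.sqrt 3 := by nlinarith
  intro n R hR hπ
  rw [hπ]
  have hub : ∀ k : ℕ, (∫ r in cantorIterate n ((3:ℝ) ^ ((n:ℝ)/2)),
      r ^ k / (Nat.factorial k) * Real.exp (-r)) ≤ 12 * Real.sqrt 3 * (2/3 : ℝ) ^ ((n:ℝ)/2) :=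
    fun k => key_upper n k
  have hbdd : BddAbove (Set.range fun k : ℕ => ∫ r in cantorIterate n ((3:ℝ) ^ ((n:ℝ)/2)),
      r ^ k / (Nat.factorial k) * Real.exp (-r)) := by
    refine ⟨12 * Real.sqrt 3 * (2/3 : ℝ) ^ ((n:ℝ)/2), ?_⟩
    rintro x ⟨k, rfl⟩
    exact hub k
  constructor
  · calc Real.exp (-1) / Real.sqrt 3 * (2/3 : ℝ) ^ ((n:ℝ)/2)
        ≤ ∫ r in cantorIterate n ((3:ℝ) ^ ((n:ℝ)/2)),
            r ^ 0 / (Nat.factorial 0) * Real.exp (-r) := key_lower n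
      _ ≤ _ := le_ciSup hbdd 0
  · exact ciSup_le hub
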